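/- If the compositions satisfy ∏_{j=0}^n w_j/(w_j + b_j) → 0 as n → ∞, then the reinforced urn process is recurrent: the process returns to state 0 infinitely often with probability one; in particular each ξ_i is finite almost surely. -/

import Mathlib

open Finset

/-- Probability that a single system, facing urns whose current compositions are
`(W j white, B j black)` for each state `j`, draws white at states `0, …, r-1`
(moving up one state after each white ball) and then black at state `r`,
i.e. that its 0-block ends at state `r`. Within one block every urn is sampled
at most once, so no reinforcement occurs inside the block. -/
noncomputable def blockProb (W B : ℕ → ℝ) (r : ℕ) : ℝ :=
  (B r / (W r + B r)) * ∏ j ∈ range r, W j / (W j + B j)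

/-- Updated white compositions after observing a system that failed at state `r`:
each urn `j < r` delivered a white ball and receives `s` extra white balls. -/
noncomputable def updW (s : ℝ) (W : ℕ → ℝ) (r : ℕ) : ℕ → ℝ :=
  fun j => if j < r then W j + s else W j

/-- Updated black compositions after observing a system that failed at state `r`:
urn `r` delivered a black ball and receives `s` extra black balls. -/
noncomputable def updB (s : ℝ) (B : ℕ → ℝ) (r : ℕ) : ℕ → ℝ :=
  fun j => if j = r then B j + s else B j

/-- Joint probability that the successive systems of the reinforced urn process
fail at the states listed in `a` : the first system fails at `a.head`, then the
urns are Pólya-reinforced, the second system fails at the next entry, etc. -/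
noncomputable def jointXi (s : ℝ) (W B : ℕ → ℝ) : List ℕ → ℝ
  | [] => 1
  | r :: a => blockProb W B r * jointXi s (updW s W r) (updB s B r) a

section Aux

variable {W B : ℕ → ℝ} {s : ℝ}

lemma blockProb_nonneg (hw : ∀ j, 0 < W j) (hb : ∀ j, 0 < B j) (r : ℕ) :
    0 ≤ blockProb W B r := by
  unfold blockProb
  have h1 : 0 ≤ B r / (W r + B r) := by
    have := hw r; have := hb r; positivity
  refine mul_nonneg h1 (Finset.prod_nonneg fun j _ => ?_)
  have := hw j; have := hb j; positivity

lemma updW_pos (hw : ∀ j, 0 < W j) (hs : 0 < s) (r : ℕ) :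
    ∀ j, 0 < updW s W r j := by
  intro j; unfold updW; split <;> [linarith [hw j]; exact hw j]

lemma updB_pos (hb : ∀ j, 0 < B j) (hs : 0 < s) (r : ℕ) :
    ∀ j, 0 < updB s B r j := by
  intro j; unfold updB; split <;> [linarith [hb j]; exact hb j]

lemma jointXi_nonneg (hs : 0 < s) :
    ∀ (a : List ℕ) (W B : ℕ → ℝ), (∀ j, 0 < W j) → (∀ j, 0 < B j) →
      0 ≤ jointXi s W B a
  | [], _, _, _, _ => by simp [jointXi]
  | r :: a, W, B, hw, hb => by
      simp only [jointXi]
      exact mul_nonneg (blockProb_nonneg hw hb r)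
        (jointXi_nonneg hs a _ _ (updW_pos hw hs r) (updB_pos hb hs r))

lemma blockProb_eq (hw : ∀ j, 0 < W j) (hb : ∀ j, 0 < B j) (r : ℕ) :
    blockProb W B r =
      (∏ j ∈ range r, W j / (W j + B j)) - ∏ j ∈ range (r + 1), W j / (W j + B j) := by
  have h : W r + B r ≠ 0 := by have := hw r; have := hb r; positivity
  have key : B r / (W r + B r) = 1 - W r / (W r + B r) := by field_simp; ring
  rw [blockProb, Finset.prod_range_succ, key]
  ring

lemma hasSum_blockProb (hw : ∀ j, 0 < W j) (hb : ∀ j, 0 < B j)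
    (hrec : Filter.Tendsto (fun n => ∏ j ∈ range (n + 1), W j / (W j + B j))
      Filter.atTop (nhds 0)) :
    HasSum (blockProb W B) 1 := by
  have hP : Filter.Tendsto (fun n => ∏ j ∈ range n, W j / (W j + B j))
      Filter.atTop (nhds 0) := (Filter.tendsto_add_atTop_iff_nat 1).mp hrec
  rw [hasSum_iff_tendsto_nat_of_nonneg (blockProb_nonneg hw hb) 1]
  have hsum : ∀ n, ∑ r ∈ range n, blockProb W B r
      = 1 - ∏ j ∈ range n, W j / (W j + B j) := by
    intro n
    calc ∑ r ∈ range n, blockProb W B r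
        = ∑ r ∈ range n, ((∏ j ∈ range r, W j / (W j + B j))
            - ∏ j ∈ range (r + 1), W j / (W j + B j)) :=
          Finset.sum_congr rfl fun r _ => blockProb_eq hw hb r
      _ = (∏ j ∈ range 0, W j / (W j + B j)) - ∏ j ∈ range n, W j / (W j + B j) :=
          Finset.sum_range_sub' _ n
      _ = 1 - ∏ j ∈ range n, W j / (W j + B j) := by simp
  simp only [hsum]
  simpa using tendsto_const_nhds.sub hP

end Aux

lemma ratio_pos {W B : ℕ → ℝ} (hw : ∀ j, 0 < W j) (hb : ∀ j, 0 < B j) (j : ℕ) :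
    0 < W j / (W j + B j) := by
  have := hw j; have := hb j; positivity

lemma hrec_updated {W B : ℕ → ℝ} {s : ℝ} (hw : ∀ j, 0 < W j) (hb : ∀ j, 0 < B j)
    (hs : 0 < s) (r : ℕ)
    (hrec : Filter.Tendsto (fun n => ∏ j ∈ range (n + 1), W j / (W j + B j))
      Filter.atTop (nhds 0)) :
    Filter.Tendsto
      (fun n => ∏ j ∈ range (n + 1),
        updW s W r j / (updW s W r j + updB s B r j))
      Filter.atTop (nhds 0) := by
  set ρ : ℕ → ℝ := fun j => W j / (W j + B j) with hρ
  set ρ' : ℕ → ℝ := fun j => updW s W r j / (updW s W r j + updB s B r j) with hρ'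
  have hρpos : ∀ j, 0 < ρ j := ratio_pos hw hb
  set K : ℝ := (∏ j ∈ range (r + 1), ρ' j) / (∏ j ∈ range (r + 1), ρ j) with hK
  have heq : ∀ n, r ≤ n →
      (∏ j ∈ range (n + 1), ρ' j) = K * ∏ j ∈ range (n + 1), ρ j := by
    intro n hn
    have hsplit : ∀ f : ℕ → ℝ, (∏ j ∈ range (r + 1), f j) * (∏ j ∈ Ico (r + 1) (n + 1), f j)
        = ∏ j ∈ range (n + 1), f j := by
      intro f
      simp only [Finset.range_eq_Ico]
      exact Finset.prod_Ico_consecutive f (Nat.zero_le _) (by omega)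
    have hsame : ∀ j ∈ Ico (r + 1) (n + 1), ρ' j = ρ j := by
      intro j hj
      rcases Finset.mem_Ico.mp hj with ⟨h1, _⟩
      have hjr : ¬ j < r := by omega
      have hjr' : j ≠ r := by omega
      simp [hρ', hρ, updW, updB, hjr, hjr']
    have hne : (∏ j ∈ range (r + 1), ρ j) ≠ 0 :=
      ne_of_gt (Finset.prod_pos fun j _ => hρpos j)
    rw [← hsplit ρ', ← hsplit ρ, Finset.prod_congr rfl hsame, hK]
    field_simp
  have h2 : Filter.Tendsto (fun n => K * ∏ j ∈ range (n + 1), ρ j)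
      Filter.atTop (nhds 0) := by
    simpa using hrec.const_mul K
  exact Filter.Tendsto.congr'
    (Filter.eventually_atTop.mpr ⟨r, fun n hn => (heq n hn).symm⟩) h2


lemma hasSum_jointXi_append {s : ℝ} (hs : 0 < s) :
    ∀ (a : List ℕ) (W B : ℕ → ℝ), (∀ j, 0 < W j) → (∀ j, 0 < B j) →
    Filter.Tendsto (fun n => ∏ j ∈ range (n + 1), W j / (W j + B j))
      Filter.atTop (nhds 0) →
    HasSum (fun r => jointXi s W B (a ++ [r])) (jointXi s W B a)
  | [], W, B, hw, hb, hrec => by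
      simpa [jointXi] using hasSum_blockProb hw hb hrec
  | q :: a, W, B, hw, hb, hrec => by
      have ih := hasSum_jointXi_append hs a (updW s W q) (updB s B q)
        (updW_pos hw hs q) (updB_pos hb hs q) (hrec_updated hw hb hs q hrec)
      simpa [jointXi] using ih.mul_left (blockProb W B q)

lemma hasSum_jointXi_ofFn {s : ℝ} (hs : 0 < s) :
    ∀ (m : ℕ) (W B : ℕ → ℝ), (∀ j, 0 < W j) → (∀ j, 0 < B j) →
    Filter.Tendsto (fun n => ∏ j ∈ range (n + 1), W j / (W j + B j))
      Filter.atTop (nhds 0) →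
    HasSum (fun a : Fin m → ℕ => jointXi s W B (List.ofFn a)) 1
  | 0, W, B, hw, hb, hrec => by
      have : HasSum (fun a : Fin 0 → ℕ => jointXi s W B (List.ofFn a))
          (jointXi s W B (List.ofFn (fun i : Fin 0 => i.elim0))) :=
        hasSum_single _ (fun b' hb' => absurd (Subsingleton.elim b' _) hb')
      simpa [jointXi] using this
  | (m + 1), W, B, hw, hb, hrec => by
      set F : ℕ × (Fin m → ℕ) → ℝ := fun p =>
        blockProb W B p.1 *
          jointXi s (updW s W p.1) (updB s B p.1) (List.ofFn p.2) with hF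
      have hfib : ∀ r, HasSum (fun g => F (r, g)) (blockProb W B r) := by
        intro r
        have ih := hasSum_jointXi_ofFn hs m (updW s W r) (updB s B r)
          (updW_pos hw hs r) (updB_pos hb hs r) (hrec_updated hw hb hs r hrec)
        simpa [hF] using ih.mul_left (blockProb W B r)
      have htop : HasSum (blockProb W B) 1 := hasSum_blockProb hw hb hrec
      have hFnn : ∀ p, 0 ≤ F p := fun p =>
        mul_nonneg (blockProb_nonneg hw hb p.1)
          (jointXi_nonneg hs _ _ _ (updW_pos hw hs p.1) (updB_pos hb hs p.1))
      have hbound : ∀ u : Finset (ℕ × (Fin m → ℕ)), ∑ p ∈ u, F p ≤ 1 := by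
        intro u
        calc ∑ p ∈ u, F p
            ≤ ∑ p ∈ (u.image Prod.fst) ×ˢ (u.image Prod.snd), F p :=
              Finset.sum_le_sum_of_subset_of_nonneg
                (fun p hp => Finset.mem_product.2
                  ⟨Finset.mem_image_of_mem _ hp, Finset.mem_image_of_mem _ hp⟩)
                (fun p _ _ => hFnn p)
          _ = ∑ r ∈ u.image Prod.fst, ∑ g ∈ u.image Prod.snd, F (r, g) :=
              Finset.sum_product _ _ _
          _ ≤ ∑ r ∈ u.image Prod.fst, blockProb W B r :=
              Finset.sum_le_sum fun r _ =>
                sum_le_hasSum _ (fun g _ => hFnn (r, g)) (hfib r)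
          _ ≤ 1 := sum_le_hasSum _ (fun r _ => blockProb_nonneg hw hb r) htop
      have hsumF : Summable F := summable_of_sum_le hFnn hbound
      have htsum : ∑' p, F p = 1 := by
        rw [hsumF.tsum_prod' fun r => (hfib r).summable]
        rw [tsum_congr fun r => (hfib r).tsum_eq]
        exact htop.tsum_eq
      have hFsum : HasSum F 1 := htsum ▸ hsumF.hasSum
      have he : HasSum ((fun a : Fin (m + 1) → ℕ => jointXi s W B (List.ofFn a))
          ∘ (Fin.consEquiv fun _ => ℕ)) 1 := by
        have hfun : ((fun a : Fin (m + 1) → ℕ => jointXi s W B (List.ofFn a))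
            ∘ (Fin.consEquiv fun _ => ℕ)) = F := by
          funext p
          rcases p with ⟨r, g⟩
          simp [hF, Fin.consEquiv, jointXi, List.ofFn_succ]
        exact hfun ▸ hFsum
      exact (Fin.consEquiv fun _ => ℕ).hasSum_iff.mp he

theorem rup_recurrent (w b : ℕ → ℝ) (s : ℝ)
    (hw : ∀ j, 0 < w j) (hb : ∀ j, 0 < b j) (hs : 0 < s)
    (hrec : Filter.Tendsto (fun n => ∏ j ∈ range (n + 1), w j / (w j + b j))
      Filter.atTop (nhds 0)) :
    (∀ a : List ℕ, ∑' r : ℕ, jointXi s w b (a ++ [r]) = jointXi s w b a) ∧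
    (∀ m : ℕ, ∑' a : Fin m → ℕ, jointXi s w b (List.ofFn a) = 1) :=
  ⟨fun a => (hasSum_jointXi_append hs a w b hw hb hrec).tsum_eq,
   fun m => (hasSum_jointXi_ofFn hs m w b hw hb hrec).tsum_eq⟩
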